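/- Let ρ₁,…,ρₙ be density matrices on ℂ^d that pairwise commute, and let p be a probability vector. Then for any density matrix σ commuting with all ρᵢ, the average fidelity satisfies Σᵢ pᵢ F(ρᵢ, σ) ≤ √(Σ_{i,j} pᵢ pⱼ F(ρᵢ, ρⱼ)), with equality when σ is proportional to (Σᵢ pᵢ ρᵢ^{1/2})². -/

import Mathlib

open Matrix BigOperators Finset ComplexOrder
open scoped MatrixOrder

variable {d n : ℕ}

open Classical in
/-- The positive semidefinite square root (zero if not PSD). -/
noncomputable def psqrt (A : Matrix (Fin d) (Fin d) ℂ) : Matrix (Fin d) (Fin d) ℂ :=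
  if h : A.PosSemidef then (h.1.eigenvectorUnitary : Matrix (Fin d) (Fin d) ℂ) *
    diagonal ((↑) ∘ Real.sqrt ∘ h.1.eigenvalues) *
    (star h.1.eigenvectorUnitary : Matrix (Fin d) (Fin d) ℂ) else 0

/-- Trace norm ‖A‖₁ = Tr √(A*A). -/
noncomputable def traceNorm (A : Matrix (Fin d) (Fin d) ℂ) : ℝ :=
  ((psqrt (Aᴴ * A)).trace).re

/-- Fidelity F(ρ,σ) = Tr √(σ^{1/2} ρ σ^{1/2}). -/
noncomputable def fid (ρ σ : Matrix (Fin d) (Fin d) ℂ) : ℝ :=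
  ((psqrt (psqrt σ * ρ * psqrt σ)).trace).re

/-- Density matrix: positive semidefinite with unit trace. -/
def IsDensity (ρ : Matrix (Fin d) (Fin d) ℂ) : Prop := ρ.PosSemidef ∧ ρ.trace = 1

/-- Contraction: spectral norm at most one, i.e. 1 - UᴴU ⪰ 0. -/
def IsContraction (U : Matrix (Fin d) (Fin d) ℂ) : Prop := (1 - Uᴴ * U).PosSemidef

/-- Probability vector. -/
def IsProbVec (p : Fin n → ℝ) : Prop := (∀ i, 0 ≤ p i) ∧ ∑ i, p i = 1

lemma psqrt_of_posSemidef {A : Matrix (Fin d) (Fin d) ℂ} (hA : A.PosSemidef) :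
    psqrt A = CFC.sqrt A := by
  rw [psqrt, dif_pos hA, CFC.sqrt_eq_cfc, cfc_nnreal_eq_real _ A, hA.1.cfc_eq]
  rw [IsHermitian.cfc, Unitary.conjStarAlgAut_apply]
  congr 3
  funext i
  simp [max_eq_left (hA.eigenvalues_nonneg i)]

lemma psqrt_posSemidef {A : Matrix (Fin d) (Fin d) ℂ} (hA : A.PosSemidef) :
    (psqrt A).PosSemidef := by rw [psqrt_of_posSemidef hA]; exact (CFC.sqrt_nonneg A).posSemidef

lemma psqrt_mul_self {A : Matrix (Fin d) (Fin d) ℂ} (hA : A.PosSemidef) :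
    psqrt A * psqrt A = A := by rw [psqrt_of_posSemidef hA]; exact CFC.sqrt_mul_sqrt_self A hA.nonneg

lemma psqrt_eq_of {A B : Matrix (Fin d) (Fin d) ℂ} (hB : B.PosSemidef) (h : B * B = A) :
    psqrt A = B := by
  have hA : A.PosSemidef := by
    have := Matrix.posSemidef_conjTranspose_mul_self B
    rwa [hB.1.eq, h] at this
  rw [psqrt_of_posSemidef hA]
  exact CFC.sqrt_unique h hB.nonneg

lemma commute_diag_sqrt {v : Fin d → ℝ} {C : Matrix (Fin d) (Fin d) ℂ}
    (h : Commute (diagonal (RCLike.ofReal ∘ v)) C) :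
    Commute (diagonal ((↑) ∘ Real.sqrt ∘ v) : Matrix (Fin d) (Fin d) ℂ) C := by
  rw [Commute, SemiconjBy] at h ⊢
  ext i j
  have hij : (v i : ℂ) * C i j = C i j * (v j : ℂ) := by
    have := congrFun (congrFun h i) j
    simpa [Matrix.diagonal_mul, Matrix.mul_diagonal] using this
  rw [Matrix.diagonal_mul, Matrix.mul_diagonal]
  rcases mul_eq_zero.mp (show ((v i : ℂ) - (v j : ℂ)) * C i j = 0 by
      rw [sub_mul, hij, mul_comm]; ring) with h0 | h0
  · have hv : v i = v j := by exact_mod_cast sub_eq_zero.mp h0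
    simp only [Function.comp_apply, hv, mul_comm]
  · simp [h0]

lemma commute_psqrt {A B : Matrix (Fin d) (Fin d) ℂ} (hA : A.PosSemidef) (h : Commute A B) :
    Commute (psqrt A) B := by
  rw [psqrt, dif_pos hA]
  set U : Matrix (Fin d) (Fin d) ℂ := (hA.1.eigenvectorUnitary : Matrix (Fin d) (Fin d) ℂ) with hUdef
  have hU1 : star U * U = 1 := Unitary.coe_star_mul_self hA.1.eigenvectorUnitary
  have hU2 : U * star U = 1 := Unitary.coe_mul_star_self hA.1.eigenvectorUnitary
  have cancel1 : ∀ X : Matrix (Fin d) (Fin d) ℂ, U * (star U * X) = X := fun X => by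
    rw [← Matrix.mul_assoc, hU2, Matrix.one_mul]
  have cancel2 : ∀ X : Matrix (Fin d) (Fin d) ℂ, star U * (U * X) = X := fun X => by
    rw [← Matrix.mul_assoc, hU1, Matrix.one_mul]
  set C : Matrix (Fin d) (Fin d) ℂ := star U * B * U with hCdef
  have hD : diagonal (RCLike.ofReal ∘ hA.1.eigenvalues) = star U * A * U :=
    by rw [← hA.1.conjStarAlgAut_star_eigenvectorUnitary, Unitary.conjStarAlgAut_apply]; simp [U]
  have hcd : Commute (diagonal (RCLike.ofReal ∘ hA.1.eigenvalues)) C := by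
    rw [Commute, SemiconjBy, hD, hCdef]
    simp only [Matrix.mul_assoc, cancel1, cancel2]
    rw [← Matrix.mul_assoc A B, h.eq, Matrix.mul_assoc]
  have hcd2 := commute_diag_sqrt hcd
  have hBC : B = U * C * star U := by
    rw [hCdef]
    simp only [Matrix.mul_assoc, cancel1]
    rw [hU2, Matrix.mul_one]
  rw [Commute, SemiconjBy]
  conv_lhs => rw [hBC]
  conv_rhs => rw [hBC]
  show U * diagonal ((↑) ∘ Real.sqrt ∘ hA.1.eigenvalues) * star U * (U * C * star U)
      = U * C * star U * (U * diagonal ((↑) ∘ Real.sqrt ∘ hA.1.eigenvalues) * star U)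
  simp only [Matrix.mul_assoc, cancel1, cancel2]
  rw [← Matrix.mul_assoc (diagonal _) C, hcd2.eq, Matrix.mul_assoc]

lemma posSemidef_mul_of_commute {A B : Matrix (Fin d) (Fin d) ℂ} (hA : A.PosSemidef)
    (hB : B.PosSemidef) (h : Commute A B) : (A * B).PosSemidef := by
  have ht : Commute (psqrt A) B := commute_psqrt hA h
  have htt : psqrt A * psqrt A = A := psqrt_mul_self hA
  have hherm : (psqrt A)ᴴ = psqrt A := (psqrt_posSemidef hA).1
  have : A * B = psqrt A * B * (psqrt A)ᴴ := by
    rw [hherm, Matrix.mul_assoc, ← ht.eq, ← Matrix.mul_assoc, htt]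
  rw [this]
  exact hB.mul_mul_conjTranspose_same _

lemma fid_eq_of_commute {ρ σ : Matrix (Fin d) (Fin d) ℂ} (hρ : ρ.PosSemidef)
    (hσ : σ.PosSemidef) (h : Commute ρ σ) :
    fid ρ σ = ((psqrt ρ * psqrt σ).trace).re := by
  have h1 : Commute (psqrt σ) ρ := commute_psqrt hσ h.symm
  have h2 : Commute (psqrt ρ) (psqrt σ) := commute_psqrt hρ h1.symm
  have hp : (psqrt ρ * psqrt σ).PosSemidef :=
    posSemidef_mul_of_commute (psqrt_posSemidef hρ) (psqrt_posSemidef hσ) h2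
  have key : psqrt σ * ρ * psqrt σ = (psqrt ρ * psqrt σ) * (psqrt ρ * psqrt σ) := by
    calc psqrt σ * ρ * psqrt σ = ρ * psqrt σ * psqrt σ := by rw [h1.eq]
      _ = ρ * σ := by rw [Matrix.mul_assoc, psqrt_mul_self hσ]
      _ = psqrt ρ * psqrt ρ * σ := by rw [psqrt_mul_self hρ]
      _ = psqrt ρ * (psqrt σ * psqrt ρ) * psqrt σ := by
          rw [← h2.eq]; simp only [Matrix.mul_assoc, psqrt_mul_self hσ]
      _ = (psqrt ρ * psqrt σ) * (psqrt ρ * psqrt σ) := by simp only [Matrix.mul_assoc]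
  rw [fid, key, psqrt_eq_of hp rfl]

lemma trace_mul_re_eq {X Y : Matrix (Fin d) (Fin d) ℂ} (hY : Y.IsHermitian) :
    ((X * Y).trace).re = ∑ i, ∑ j, ((X i j).re * (Y i j).re + (X i j).im * (Y i j).im) := by
  have hYc : ∀ i j, Y j i = starRingEnd ℂ (Y i j) := fun i j => by
    have := congrFun (congrFun hY.eq j) i
    rw [Matrix.conjTranspose_apply] at this
    exact this.symm
  rw [Matrix.trace]
  simp only [Matrix.diag_apply, Matrix.mul_apply, Complex.re_sum]
  congr 1; ext i; congr 1; ext j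
  rw [hYc i j]
  simp [Complex.mul_re]

lemma trace_cs {X Y : Matrix (Fin d) (Fin d) ℂ} (hX : X.IsHermitian) (hY : Y.IsHermitian) :
    ((X * Y).trace).re ≤ Real.sqrt (((X * X).trace).re) * Real.sqrt (((Y * Y).trace).re) := by
  rw [trace_mul_re_eq hY, trace_mul_re_eq hX, trace_mul_re_eq hY]
  have := Real.sum_mul_le_sqrt_mul_sqrt (Finset.univ : Finset ((Fin d × Fin d) × Bool))
    (fun q => if q.2 then (X q.1.1 q.1.2).re else (X q.1.1 q.1.2).im)
    (fun q => if q.2 then (Y q.1.1 q.1.2).re else (Y q.1.1 q.1.2).im)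
  simpa [Fintype.sum_prod_type, Fintype.sum_bool, pow_two, mul_add, add_comm] using this

lemma posSemidef_real_smul {A : Matrix (Fin d) (Fin d) ℂ} (hA : A.PosSemidef) {c : ℝ}
    (hc : 0 ≤ c) : ((c : ℂ) • A).PosSemidef := by
  refine ⟨?_, fun x => ?_⟩
  · rw [Matrix.IsHermitian, Matrix.conjTranspose_smul, hA.1.eq]
    congr 1
    exact Complex.conj_ofReal _
  · exact (hA.smul (a := (c : ℂ)) (by exact_mod_cast hc)).2 x

lemma posSemidef_sum {ι : Type*} (s : Finset ι) (f : ι → Matrix (Fin d) (Fin d) ℂ)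
    (h : ∀ i ∈ s, (f i).PosSemidef) : (∑ i ∈ s, f i).PosSemidef :=
  Finset.sum_induction f _ (fun _ _ ha hb => ha.add hb) .zero h


/-- Product bound for pairwise commuting ensembles, with equality for states proportional
to (Σᵢ pᵢ ρᵢ^{1/2})². -/
theorem commuting_product_bound (ρ : Fin n → Matrix (Fin d) (Fin d) ℂ) (p : Fin n → ℝ)
    (hρ : ∀ i, IsDensity (ρ i)) (hp : IsProbVec p)
    (hcomm : ∀ i j, Commute (ρ i) (ρ j)) :
    (∀ σ : Matrix (Fin d) (Fin d) ℂ, IsDensity σ → (∀ i, Commute (ρ i) σ) →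
        ∑ i, p i * fid (ρ i) σ ≤ Real.sqrt (∑ i, ∑ j, p i * p j * fid (ρ i) (ρ j))) ∧
    (∀ σ : Matrix (Fin d) (Fin d) ℂ, IsDensity σ →
        (∃ c : ℝ, 0 < c ∧ σ = (c : ℂ) •
          ((∑ i, (p i : ℂ) • psqrt (ρ i)) * (∑ i, (p i : ℂ) • psqrt (ρ i)))) →
        ∑ i, p i * fid (ρ i) σ = Real.sqrt (∑ i, ∑ j, p i * p j * fid (ρ i) (ρ j))) := by
  obtain ⟨hp0, hp1⟩ := hp
  set A : Matrix (Fin d) (Fin d) ℂ := ∑ i, (p i : ℂ) • psqrt (ρ i) with hAdef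
  have hsq : ∀ i, (psqrt (ρ i)).PosSemidef := fun i => psqrt_posSemidef (hρ i).1
  have hApsd : A.PosSemidef :=
    posSemidef_sum _ _ (fun i _ => posSemidef_real_smul (hsq i) (hp0 i))
  have hAherm : A.IsHermitian := hApsd.1
  -- trace expansion
  have htr : ∀ B : Matrix (Fin d) (Fin d) ℂ,
      (A * B).trace = ∑ i, (p i : ℂ) * (psqrt (ρ i) * B).trace := by
    intro B
    rw [hAdef, Finset.sum_mul, Matrix.trace_sum]
    simp [smul_mul_assoc, Matrix.trace_smul, smul_eq_mul]
  have htrre : ∀ B : Matrix (Fin d) (Fin d) ℂ,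
      ((A * B).trace).re = ∑ i, p i * ((psqrt (ρ i) * B).trace).re := by
    intro B
    rw [htr B, Complex.re_sum]
    refine Finset.sum_congr rfl fun i _ => ?_
    simp [Complex.mul_re]
  have hfidij : ∀ i j, fid (ρ i) (ρ j) = ((psqrt (ρ i) * psqrt (ρ j)).trace).re :=
    fun i j => fid_eq_of_commute (hρ i).1 (hρ j).1 (hcomm i j)
  have hAA : ((A * A).trace).re = ∑ i, ∑ j, p i * p j * fid (ρ i) (ρ j) := by
    rw [htrre A]
    refine Finset.sum_congr rfl fun i _ => ?_
    have : psqrt (ρ i) * A = ∑ j, (p j : ℂ) • (psqrt (ρ i) * psqrt (ρ j)) := by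
      rw [hAdef, Finset.mul_sum]
      simp [mul_smul_comm]
    rw [this, Matrix.trace_sum, Complex.re_sum, Finset.mul_sum]
    refine Finset.sum_congr rfl fun j _ => ?_
    rw [hfidij i j, Matrix.trace_smul]
    simp [Complex.mul_re]; ring
  constructor
  · intro σ hσ hcs
    have hfidσ : ∀ i, fid (ρ i) σ = ((psqrt (ρ i) * psqrt σ).trace).re :=
      fun i => fid_eq_of_commute (hρ i).1 hσ.1 (hcs i)
    have hσherm : (psqrt σ).IsHermitian := (psqrt_posSemidef hσ.1).1
    have hσtr : ((psqrt σ * psqrt σ).trace).re = 1 := by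
      rw [psqrt_mul_self hσ.1, hσ.2]; rfl
    calc ∑ i, p i * fid (ρ i) σ = ((A * psqrt σ).trace).re := by
          rw [htrre]; exact Finset.sum_congr rfl fun i _ => by rw [hfidσ i]
      _ ≤ Real.sqrt (((A * A).trace).re) * Real.sqrt (((psqrt σ * psqrt σ).trace).re) :=
          trace_cs hAherm hσherm
      _ = Real.sqrt (∑ i, ∑ j, p i * p j * fid (ρ i) (ρ j)) := by
          rw [hσtr, Real.sqrt_one, mul_one, hAA]
  · rintro σ hσ ⟨c, hc, hσeq⟩
    have hpsσ : psqrt σ = ((Real.sqrt c : ℝ) : ℂ) • A := by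
      refine psqrt_eq_of (posSemidef_real_smul hApsd (Real.sqrt_nonneg c)) ?_
      rw [smul_mul_assoc, mul_smul_comm, smul_smul, ← Complex.ofReal_mul,
        Real.mul_self_sqrt hc.le, hσeq]
    have hcAi : ∀ i, Commute (ρ i) A := fun i =>
      Commute.sum_right _ _ _ (fun j _ =>
        ((commute_psqrt (hρ j).1 (hcomm j i)).symm).smul_right _)
    have hfidσ : ∀ i, fid (ρ i) σ = ((psqrt (ρ i) * psqrt σ).trace).re := fun i =>
      fid_eq_of_commute (hρ i).1 hσ.1
        (by rw [hσeq]; exact ((hcAi i).mul_right (hcAi i)).smul_right _)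
    have hTre : ((A * A).trace).re = c⁻¹ := by
      have h1 : (c : ℂ) * (A * A).trace = 1 := by
        rw [← smul_eq_mul, ← Matrix.trace_smul, ← hσeq, hσ.2]
      have h2 : (A * A).trace = ((c⁻¹ : ℝ) : ℂ) := by
        rw [Complex.ofReal_inv]
        exact eq_inv_of_mul_eq_one_right h1
      rw [h2, Complex.ofReal_re]
    have hsum : ∑ i, p i * fid (ρ i) σ = Real.sqrt c * c⁻¹ := by
      calc ∑ i, p i * fid (ρ i) σ = ((A * psqrt σ).trace).re := by
            rw [htrre]; exact Finset.sum_congr rfl fun i _ => by rw [hfidσ i]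
        _ = Real.sqrt c * c⁻¹ := by
            rw [hpsσ, mul_smul_comm, Matrix.trace_smul]
            simp [Complex.mul_re, hTre]
    rw [hsum, ← hAA, hTre, Real.sqrt_inv]
    rw [eq_comm, inv_eq_iff_eq_inv, eq_comm]
    rw [mul_inv, inv_inv]
    rw [← Real.sqrt_mul_self hc.le]
    field_simp
    rw [Real.sq_sqrt (Real.sqrt_nonneg _)]
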